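/- arXiv:1703.10374 — 2 statements merged into one kernel-verified Lean document; each statement's English description precedes it below -/
import Mathlib

section
/- Every topological space X over a metrizable space B0 admits an ANR_{B0}-resolution over B0, i.e. there exist an inverse system X = (X_α, p_{αα'}, 𝒜) in Top_{B0} with every X_α an ANR_{B0}-space and a morphism p = (p_α) : X → X satisfying conditions (R1) and (R2). -/
open Set Topology TopologicalSpace unitInterval

universe u

/-- `f` is a fiber preserving (f.p.) map from `(X, πX)` to `(Y, πY)` over `B0`. -/
def IsFPMap {B0 X Y : Type u} [TopologicalSpace B0] [TopologicalSpace X] [TopologicalSpace Y]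
    (πX : X → B0) (πY : Y → B0) (f : X → Y) : Prop :=
  Continuous f ∧ ∀ x, πY (f x) = πX x

/-- Two f.p. maps are f.p. homotopic (homotopic over `B0`). -/
def FPHomotopic {B0 X Y : Type u} [TopologicalSpace B0] [TopologicalSpace X] [TopologicalSpace Y]
    (πX : X → B0) (πY : Y → B0) (f g : X → Y) : Prop :=
  ∃ H : X × unitInterval → Y, Continuous H ∧
    (∀ x, H (x, 0) = f x) ∧ (∀ x, H (x, 1) = g x) ∧
    ∀ x t, πY (H (x, t)) = πX x

/-- A metrizable space `(Y, πY)` over `B0` is an absolute neighbourhood retract over `B0`: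
for every closed f.p. embedding into a metrizable space over `B0` there is a neighbourhood of the
image and an f.p. retraction of that neighbourhood onto the image. -/
def IsFiberANR (B0 : Type u) [TopologicalSpace B0] (Y : Type u) [TopologicalSpace Y]
    (πY : Y → B0) : Prop :=
  MetrizableSpace Y ∧ Continuous πY ∧
  ∀ (X : Type u) (_ : TopologicalSpace X), MetrizableSpace X →
    ∀ πX : X → B0, Continuous πX →
    ∀ i : Y → X, IsClosedEmbedding i → (∀ y, πX (i y) = πY y) →
    ∃ U : Set X, U ∈ nhdsSet (Set.range i) ∧
    ∃ r : U → X, Continuous r ∧ (∀ u : U, r u ∈ Set.range i) ∧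
      (∀ u : U, πX (r u) = πX u) ∧ ∀ u : U, (u : X) ∈ Set.range i → r u = u

/-- A metrizable space `(Y, πY)` over `B0` is an absolute neighbourhood extensor over `B0`. -/
def IsFiberANE (B0 : Type u) [TopologicalSpace B0] (Y : Type u) [TopologicalSpace Y]
    (πY : Y → B0) : Prop :=
  MetrizableSpace Y ∧ Continuous πY ∧
  ∀ (X : Type u) (_ : TopologicalSpace X), MetrizableSpace X →
    ∀ πX : X → B0, Continuous πX →
    ∀ A : Set X, IsClosed A →
    ∀ f : A → Y, Continuous f → (∀ a : A, πY (f a) = πX a) →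
    ∃ U : Set X, U ∈ nhdsSet A ∧
    ∃ g : U → Y, Continuous g ∧ (∀ u : U, πY (g u) = πX u) ∧
      ∀ (a : X) (ha : a ∈ A) (hu : a ∈ U), g ⟨a, hu⟩ = f ⟨a, ha⟩

/-- An open cover of a topological space. -/
def IsOpenCover {Y : Type u} [TopologicalSpace Y] (𝒰 : Set (Set Y)) : Prop :=
  (∀ V ∈ 𝒰, IsOpen V) ∧ ⋃₀ 𝒰 = Set.univ

/-- Two maps are `𝒰`-near. -/
def UNear {X Y : Type u} (𝒰 : Set (Set Y)) (f g : X → Y) : Prop :=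
  ∀ x, ∃ V ∈ 𝒰, f x ∈ V ∧ g x ∈ V

/-- The (topological) weight of a space: the least cardinality of a basis of its topology. -/
noncomputable def tweight (X : Type u) [TopologicalSpace X] : Cardinal.{u} :=
  sInf {c | ∃ B : Set (Set X), IsTopologicalBasis B ∧ Cardinal.mk B = c}

/-- An inverse system in `Top_{B0}`: a directed set of indices, spaces over `B0` and f.p.
bonding maps. -/
structure FibInvSys (B0 : Type u) [TopologicalSpace B0] : Type (u + 1) where
  Idx : Type u
  le : Idx → Idx → Prop
  le_refl : ∀ a, le a a
  le_trans : ∀ a b c, le a b → le b c → le a c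
  directed : ∀ a b, ∃ c, le a c ∧ le b c
  obj : Idx → Type u
  topInst : ∀ a, TopologicalSpace (obj a)
  proj : ∀ a, obj a → B0
  proj_cont : ∀ a, @Continuous _ _ (topInst a) _ (proj a)
  bond : ∀ a a', le a a' → obj a' → obj a
  bond_cont : ∀ a a' (h : le a a'), @Continuous _ _ (topInst a') (topInst a) (bond a a' h)
  bond_fp : ∀ a a' (h : le a a') (x : obj a'), proj a (bond a a' h x) = proj a' x
  bond_id : ∀ a (x : obj a), bond a a (le_refl a) x = x
  bond_comp : ∀ a a' a'' (h : le a a') (h' : le a' a'') (x : obj a''),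
    bond a a' h (bond a' a'' h' x) = bond a a'' (le_trans a a' a'' h h') x

attribute [instance] FibInvSys.topInst

/-- A morphism from a space `(X, πX)` over `B0` to an inverse system in `Top_{B0}`. -/
structure FibMapToSys {B0 : Type u} [TopologicalSpace B0] (X : Type u) [TopologicalSpace X]
    (πX : X → B0) (S : FibInvSys B0) where
  maps : ∀ a : S.Idx, X → S.obj a
  cont : ∀ a, Continuous (maps a)
  fp : ∀ a x, S.proj a (maps a x) = πX x
  comm : ∀ a a' (h : S.le a a') (x : X), S.bond a a' h (maps a' x) = maps a x

section Conditions

variable {B0 : Type u} [TopologicalSpace B0] (X : Type u) [TopologicalSpace X]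
  (πX : X → B0) (S : FibInvSys B0)

/-- Condition (R1) of a resolution over `B0`. -/
def CondR1 (p : FibMapToSys X πX S) : Prop :=
  ∀ (P : Type u) (_ : TopologicalSpace P) (πP : P → B0), IsFiberANR B0 P πP →
    ∀ 𝒰 : Set (Set P), IsOpenCover 𝒰 →
    ∀ h : X → P, IsFPMap πX πP h →
    ∃ (a : S.Idx) (f : S.obj a → P), IsFPMap (S.proj a) πP f ∧
      UNear 𝒰 h fun x => f (p.maps a x)

/-- Condition (R2) of a resolution over `B0`. -/
def CondR2 (p : FibMapToSys X πX S) : Prop :=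
  ∀ (P : Type u) (_ : TopologicalSpace P) (πP : P → B0), IsFiberANR B0 P πP →
    ∀ 𝒰 : Set (Set P), IsOpenCover 𝒰 →
    ∃ 𝒰' : Set (Set P), IsOpenCover 𝒰' ∧
      ∀ (a : S.Idx) (f f' : S.obj a → P), IsFPMap (S.proj a) πP f → IsFPMap (S.proj a) πP f' →
        UNear 𝒰' (fun x => f (p.maps a x)) (fun x => f' (p.maps a x)) →
        ∃ (a' : S.Idx) (h : S.le a a'),
          UNear 𝒰 (fun y => f (S.bond a a' h y)) fun y => f' (S.bond a a' h y)

/-- `p` is a resolution over `B0`. -/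
def IsFibResolution (p : FibMapToSys X πX S) : Prop :=
  CondR1 X πX S p ∧ CondR2 X πX S p

/-- Condition (E1) of an expansion over `B0`. -/
def CondE1 (p : FibMapToSys X πX S) : Prop :=
  ∀ (P : Type u) (_ : TopologicalSpace P) (πP : P → B0), IsFiberANR B0 P πP →
    ∀ f : X → P, IsFPMap πX πP f →
    ∃ (a : S.Idx) (h : S.obj a → P), IsFPMap (S.proj a) πP h ∧
      FPHomotopic πX πP (fun x => h (p.maps a x)) f

/-- Condition (E2) of an expansion over `B0`. -/
def CondE2 (p : FibMapToSys X πX S) : Prop :=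
  ∀ (P : Type u) (_ : TopologicalSpace P) (πP : P → B0), IsFiberANR B0 P πP →
    ∀ (a : S.Idx) (f f' : S.obj a → P), IsFPMap (S.proj a) πP f → IsFPMap (S.proj a) πP f' →
      FPHomotopic πX πP (fun x => f (p.maps a x)) (fun x => f' (p.maps a x)) →
      ∃ (a' : S.Idx) (h : S.le a a'),
        FPHomotopic (S.proj a') πP (fun y => f (S.bond a a' h y)) fun y => f' (S.bond a a' h y)

/-- Two f.p. homotopies `S, T : X × I → P` are f.p. homotopic rel `X × ∂I`. -/
def FPHomotopicRelEnds {P : Type u} [TopologicalSpace P] (πP : P → B0)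
    (S T : X × unitInterval → P) : Prop :=
  ∃ G : (X × unitInterval) × unitInterval → P, Continuous G ∧
    (∀ z, G (z, 0) = S z) ∧ (∀ z, G (z, 1) = T z) ∧
    (∀ z s, πP (G (z, s)) = πX z.1) ∧
    (∀ x s, G ((x, 0), s) = S (x, 0)) ∧ ∀ x s, G ((x, 1), s) = S (x, 1)

/-- Condition (SE2) of a strong expansion over `B0`. -/
def CondSE2 (p : FibMapToSys X πX S) : Prop :=
  ∀ (P : Type u) (_ : TopologicalSpace P) (πP : P → B0), IsFiberANR B0 P πP →
    ∀ (a : S.Idx) (f0 f1 : S.obj a → P), IsFPMap (S.proj a) πP f0 → IsFPMap (S.proj a) πP f1 →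
    ∀ Sh : X × unitInterval → P, Continuous Sh → (∀ x t, πP (Sh (x, t)) = πX x) →
      (∀ x, Sh (x, 0) = f0 (p.maps a x)) → (∀ x, Sh (x, 1) = f1 (p.maps a x)) →
      ∃ (a' : S.Idx) (h : S.le a a') (H : S.obj a' × unitInterval → P),
        Continuous H ∧ (∀ z t, πP (H (z, t)) = S.proj a' z) ∧
        (∀ z, H (z, 0) = f0 (S.bond a a' h z)) ∧
        (∀ z, H (z, 1) = f1 (S.bond a a' h z)) ∧
        FPHomotopicRelEnds X πX πP Sh fun zt => H (p.maps a' zt.1, zt.2)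

/-- `p` is a strong expansion over `B0`. -/
def IsFibStrongExpansion (p : FibMapToSys X πX S) : Prop :=
  CondE1 X πX S p ∧ CondSE2 X πX S p

end Conditions


open Set Topology TopologicalSpace Metric



/-- Dugundji extension theorem (normed target, convex constraint). -/
theorem dugundji_ext {Z E : Type*} [MetricSpace Z] [NormedAddCommGroup E] [NormedSpace ℝ E]
    {A : Set Z} (hA : IsClosed A) (hne : A.Nonempty) {t : Set E} (ht : Convex ℝ t)
    (f : A → E) (hf : Continuous f) (hft : ∀ a, f a ∈ t) :
    ∃ F : Z → E, Continuous F ∧ (∀ a : A, F (a : Z) = f a) ∧ ∀ z, F z ∈ t := by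
  classical
  set B : Set Z := Aᶜ with hB
  have hBo : IsOpen B := hA.isOpen_compl
  have hρ : ∀ c : B, 0 < infDist (c : Z) A := fun c =>
    (hA.notMem_iff_infDist_pos hne).mp c.2
  set U : B → Set B := fun c => {y : B | dist (y : Z) (c : Z) < infDist (c : Z) A / 2} with hU
  have hUo : ∀ c, IsOpen (U c) := by
    intro c
    exact isOpen_lt (Continuous.dist continuous_subtype_val continuous_const) continuous_const
  have hUc : (univ : Set B) ⊆ ⋃ c, U c := by
    intro y _
    refine mem_iUnion.mpr ⟨y, ?_⟩
    show dist (y : Z) (y : Z) < infDist (y : Z) A / 2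
    rw [dist_self]
    exact half_pos (hρ y)
  obtain ⟨φ, hφ⟩ := PartitionOfUnity.exists_isSubordinate isClosed_univ U hUo hUc
  have hpt : ∀ c : B, ∃ y ∈ A, dist (c : Z) y < 2 * infDist (c : Z) A := by
    intro c
    exact (infDist_lt_iff hne).mp (by nlinarith [hρ c])
  choose a ha hda using hpt
  set G : B → E := fun y => ∑ᶠ c, φ c y • f ⟨a c, ha c⟩ with hG
  set F : Z → E := fun z => if hz : z ∈ A then f ⟨z, hz⟩ else G ⟨z, hz⟩ with hF
  have hGsum : ∀ y : B, ∑ i ∈ φ.finsupport y, φ i y • f ⟨a i, ha i⟩ = G y := fun y =>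
    φ.sum_finsupport_smul_eq_finsum (fun i _ => f ⟨a i, ha i⟩)
  have hGt : ∀ y : B, G y ∈ t := by
    intro y
    rw [← hGsum y]
    refine ht.sum_mem (fun i _ => φ.nonneg i y) (φ.sum_finsupport (mem_univ y)) ?_
    exact fun i _ => hft _
  have hGcont : Continuous G :=
    φ.continuous_finsum_smul (fun i x _ => continuousAt_const)
  have hFB : ∀ y : B, F (y : Z) = G y := by
    intro y
    have hyA : (y : Z) ∉ A := y.2
    simp only [hF, dif_neg hyA]
  have hFA : ∀ z (hz : z ∈ A), F z = f ⟨z, hz⟩ := fun z hz => dif_pos hz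
  have hkey : ∀ (x₀ : Z), x₀ ∈ A → ∀ (y : B) (c : B), φ c y ≠ 0 →
      dist (a c) x₀ ≤ 6 * dist (y : Z) x₀ := by
    intro x₀ hx₀ y c hc
    have hyU : y ∈ U c := hφ c (subset_tsupport _ (by simpa using hc))
    have h1 : dist (y : Z) (c : Z) < infDist (c : Z) A / 2 := hyU
    have h2 : infDist (c : Z) A ≤ dist (c : Z) x₀ := infDist_le_dist_of_mem hx₀
    have h3 : dist (c : Z) x₀ ≤ dist (c : Z) (y : Z) + dist (y : Z) x₀ := dist_triangle _ _ _
    have h4 : dist (c : Z) (y : Z) = dist (y : Z) (c : Z) := dist_comm _ _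
    have h6 : dist (a c) x₀ ≤ dist (a c) (c : Z) + dist (c : Z) (y : Z) + dist (y : Z) x₀ :=
      dist_triangle4 _ _ _ _
    have h7 : dist (a c) (c : Z) = dist (c : Z) (a c) := dist_comm _ _
    nlinarith [hda c]
  refine ⟨F, ?_, fun a' => hFA _ a'.2, ?_⟩
  · rw [continuous_iff_continuousAt]
    intro z
    by_cases hz : z ∈ A
    · rw [Metric.continuousAt_iff]
      intro ε hε
      have hfc : ContinuousAt f ⟨z, hz⟩ := hf.continuousAt
      rw [Metric.continuousAt_iff] at hfc
      obtain ⟨δ₁, hδ₁, hδf⟩ := hfc (ε / 2) (by positivity)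
      refine ⟨δ₁ / 7, by positivity, ?_⟩
      intro x hx
      rw [hFA z hz]
      by_cases hxA : x ∈ A
      · rw [hFA x hxA]
        refine lt_of_lt_of_le (hδf ?_) (by linarith)
        rw [Subtype.dist_eq]
        calc dist x z < δ₁ / 7 := hx
        _ < δ₁ := by linarith
      · have hxB : x ∈ B := hxA
        rw [show F x = G ⟨x, hxB⟩ from hFB ⟨x, hxB⟩]
        set y : B := ⟨x, hxB⟩ with hy
        have hclose : ∀ i ∈ φ.finsupport y, dist (f ⟨a i, ha i⟩) (f ⟨z, hz⟩) ≤ ε / 2 := by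
          intro i hi
          have hine : φ i y ≠ 0 := by simpa using (φ.mem_finsupport y).mp hi
          have h6 := hkey z hz y i hine
          refine (hδf ?_).le
          rw [Subtype.dist_eq]
          have hxz : dist (y : Z) z < δ₁ / 7 := hx
          calc dist (a i) z ≤ 6 * dist (y : Z) z := h6
          _ < δ₁ := by nlinarith
        have hsum1 : ∑ i ∈ φ.finsupport y, φ i y = 1 := φ.sum_finsupport (mem_univ y)
        have hfz : (f ⟨z, hz⟩ : E) = ∑ i ∈ φ.finsupport y, φ i y • f ⟨z, hz⟩ := by
          rw [← Finset.sum_smul, hsum1, one_smul]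
        have hrw : G y - f ⟨z, hz⟩
            = ∑ i ∈ φ.finsupport y, φ i y • (f ⟨a i, ha i⟩ - f ⟨z, hz⟩) := by
          conv_lhs => rw [← hGsum y, hfz]
          rw [← Finset.sum_sub_distrib]
          refine Finset.sum_congr rfl fun i _ => ?_
          rw [smul_sub]
        calc dist (G y) (f ⟨z, hz⟩) = ‖G y - f ⟨z, hz⟩‖ := dist_eq_norm _ _
        _ = ‖∑ i ∈ φ.finsupport y, φ i y • (f ⟨a i, ha i⟩ - f ⟨z, hz⟩)‖ := by rw [hrw]
        _ ≤ ∑ i ∈ φ.finsupport y, ‖φ i y • (f ⟨a i, ha i⟩ - f ⟨z, hz⟩)‖ := norm_sum_le _ _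
        _ = ∑ i ∈ φ.finsupport y, φ i y * ‖f ⟨a i, ha i⟩ - f ⟨z, hz⟩‖ := by
            refine Finset.sum_congr rfl fun i _ => ?_
            rw [norm_smul, Real.norm_eq_abs, abs_of_nonneg (φ.nonneg i y)]
        _ ≤ ∑ i ∈ φ.finsupport y, φ i y * (ε / 2) := by
            refine Finset.sum_le_sum fun i hi => ?_
            refine mul_le_mul_of_nonneg_left ?_ (φ.nonneg i y)
            rw [← dist_eq_norm]
            exact hclose i hi
        _ = ε / 2 := by rw [← Finset.sum_mul, hsum1, one_mul]
        _ < ε := by linarith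
    · have hzB : z ∈ B := hz
      have hcon : ContinuousOn F B := by
        rw [continuousOn_iff_continuous_restrict]
        exact hGcont.congr fun y => (hFB y).symm
      exact hcon.continuousAt (hBo.mem_nhds hzB)
  · intro z
    by_cases hz : z ∈ A
    · rw [hFA z hz]; exact hft _
    · rw [show F z = G ⟨z, hz⟩ from hFB ⟨z, hz⟩]; exact hGt _



noncomputable section

variable {P : Type*} [MetricSpace P]

/-- Kuratowski-type embedding of a metric space into bounded continuous functions. -/
def kurEmb (p₀ : P) (p : P) : BoundedContinuousFunction P ℝ :=
  BoundedContinuousFunction.mkOfBound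
    ⟨fun q => dist p q - dist p₀ q, by fun_prop⟩ (2 * dist p p₀)
    (by
      intro x y
      rw [Real.dist_eq]
      simp only [ContinuousMap.coe_mk]
      obtain ⟨h1a, h1b⟩ := abs_le.mp (abs_dist_sub_le p p₀ x)
      obtain ⟨h2a, h2b⟩ := abs_le.mp (abs_dist_sub_le p p₀ y)
      rw [abs_le]
      constructor <;> nlinarith)

@[simp] lemma kurEmb_apply (p₀ p q : P) : kurEmb p₀ p q = dist p q - dist p₀ q := rfl

lemma kurEmb_isometry (p₀ : P) : Isometry (kurEmb p₀) := by
  refine Isometry.of_dist_eq fun p p' => ?_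
  refine le_antisymm ?_ ?_
  · refine (BoundedContinuousFunction.dist_le dist_nonneg).mpr fun q => ?_
    rw [Real.dist_eq]
    simp only [kurEmb_apply]
    calc |dist p q - dist p₀ q - (dist p' q - dist p₀ q)| = |dist p q - dist p' q| := by
          ring_nf
    _ ≤ dist p p' := abs_dist_sub_le _ _ _
  · calc dist p p' = dist (kurEmb p₀ p p') (kurEmb p₀ p' p') := by
          simp only [kurEmb_apply, dist_self, Real.dist_eq, zero_sub, sub_neg_eq_add,
            sub_add_cancel]
          exact (abs_of_nonneg dist_nonneg).symm
    _ ≤ dist (kurEmb p₀ p) (kurEmb p₀ p') := BoundedContinuousFunction.dist_coe_le_dist _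

/-- Kuratowski–Wojdysławski: the image of the embedding is closed in its convex hull. -/
lemma kurEmb_closed_in_hull (p₀ : P) {v : BoundedContinuousFunction P ℝ}
    (hv : v ∈ convexHull ℝ (range (kurEmb p₀)))
    (hcl : v ∈ closure (range (kurEmb p₀))) : v ∈ range (kurEmb p₀) := by
  classical
  rw [convexHull_eq] at hv
  obtain ⟨ι, s, w, z, hw0, hw1, hzs, hv⟩ := hv
  have hcm : s.centerMass w z = ∑ i ∈ s, w i • z i := by
    rw [Finset.centerMass, hw1, inv_one, one_smul]
  have hm' : ∀ i, ∃ q : P, i ∈ s → z i = kurEmb p₀ q := by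
    intro i
    by_cases hi : i ∈ s
    · obtain ⟨q, hq⟩ := hzs i hi
      exact ⟨q, fun _ => hq.symm⟩
    · exact ⟨p₀, fun h => absurd h hi⟩
  choose m hm using hm'
  have hex : ∃ i₀ ∈ s, 0 < w i₀ := by
    by_contra hcon
    push_neg at hcon
    have : ∑ i ∈ s, w i = 0 := Finset.sum_eq_zero fun i hi => le_antisymm (hcon i hi) (hw0 i hi)
    rw [hw1] at this; norm_num at this
  obtain ⟨i₀, hi₀s, hi₀⟩ := hex
  have hkey : ∀ p : P, w i₀ * dist (m i₀) p ≤ dist v (kurEmb p₀ p) := by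
    intro p
    have heval : (v : P → ℝ) p - kurEmb p₀ p p = ∑ i ∈ s, w i * dist (m i) p := by
      rw [← hv, hcm]
      rw [show ((∑ i ∈ s, w i • z i : BoundedContinuousFunction P ℝ) : P → ℝ)
          = ∑ i ∈ s, (fun q => w i * z i q) from by
        rw [BoundedContinuousFunction.coe_sum]; rfl]
      rw [Finset.sum_apply]
      have : ∀ i ∈ s, w i * z i p = w i * dist (m i) p - w i * dist p₀ p := by
        intro i hi
        rw [hm i hi, kurEmb_apply]; ring
      rw [Finset.sum_congr rfl this, Finset.sum_sub_distrib, ← Finset.sum_mul, hw1]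
      simp [dist_self]
    have h1 : w i₀ * dist (m i₀) p ≤ ∑ i ∈ s, w i * dist (m i) p :=
      Finset.single_le_sum (fun i hi => mul_nonneg (hw0 i hi) dist_nonneg) hi₀s
    calc w i₀ * dist (m i₀) p ≤ ∑ i ∈ s, w i * dist (m i) p := h1
    _ = (v : P → ℝ) p - kurEmb p₀ p p := heval.symm
    _ ≤ |(v : P → ℝ) p - kurEmb p₀ p p| := le_abs_self _
    _ = dist ((v : P → ℝ) p) (kurEmb p₀ p p) := (Real.dist_eq _ _).symm
    _ ≤ dist v (kurEmb p₀ p) := BoundedContinuousFunction.dist_coe_le_dist _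
  refine ⟨m i₀, ?_⟩
  have hd0 : dist v (kurEmb p₀ (m i₀)) ≤ 0 := by
    refine le_of_forall_pos_le_add fun ε hε => ?_
    have hε' : 0 < ε * w i₀ / (1 + w i₀) := by positivity
    obtain ⟨b, ⟨p, rfl⟩, hb⟩ := Metric.mem_closure_iff.mp hcl _ hε'
    have h1 := hkey p
    have h3 : dist v (kurEmb p₀ (m i₀)) ≤ dist v (kurEmb p₀ p) + dist p (m i₀) := by
      calc dist v (kurEmb p₀ (m i₀))
          ≤ dist v (kurEmb p₀ p) + dist (kurEmb p₀ p) (kurEmb p₀ (m i₀)) := dist_triangle _ _ _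
      _ = dist v (kurEmb p₀ p) + dist p (m i₀) := by rw [(kurEmb_isometry p₀).dist_eq]
    rw [dist_comm p (m i₀)] at h3
    have hw2 : 0 < 1 + w i₀ := by linarith
    have hd : dist (m i₀) p ≤ dist v (kurEmb p₀ p) / w i₀ := by
      rw [le_div_iff₀ hi₀, mul_comm]
      exact h1
    have : dist v (kurEmb p₀ p) ≤ ε * w i₀ / (1 + w i₀) := hb.le
    rw [zero_add]
    have hdiv : dist v (kurEmb p₀ p) / w i₀ ≤ ε / (1 + w i₀) := by
      rw [div_le_div_iff₀ hi₀ hw2]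
      calc dist v (kurEmb p₀ p) * (1 + w i₀) ≤ ε * w i₀ / (1 + w i₀) * (1 + w i₀) := by
            exact mul_le_mul_of_nonneg_right this hw2.le
      _ = ε * w i₀ := by field_simp
    calc dist v (kurEmb p₀ (m i₀)) ≤ dist v (kurEmb p₀ p) + dist (m i₀) p := h3
    _ ≤ ε * w i₀ / (1 + w i₀) + ε / (1 + w i₀) := add_le_add this (hd.trans hdiv)
    _ = ε := by field_simp; ring
  exact (eq_of_dist_eq_zero (le_antisymm hd0 dist_nonneg)).symm

end


noncomputable section ResolutionConstruction

/-- A chart datum: a subset of `X →₀ ℝ` with a topology. -/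
structure PreChart (X : Type u) where
  s : Set (X →₀ ℝ)
  τ : TopologicalSpace s

/-- The carrier of a pre-chart. -/
def PreChart.Carrier {X : Type u} (c : PreChart X) : Type u := ↥c.s

instance {X : Type u} (c : PreChart X) : TopologicalSpace c.Carrier := c.τ

/-- A resolution datum over `X`: a metrizable chart which is an absolute extensor
for metrizable spaces, together with a continuous map from `X` into it. -/
structure ResDatum (X : Type u) [TopologicalSpace X] extends PreChart X where
  hmetr : MetrizableSpace toPreChart.Carrier
  hext : ∀ (Z : Type u) [TopologicalSpace Z], MetrizableSpace Z →
    ∀ A : Set Z, IsClosed A → A.Nonempty →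
    ∀ f : A → toPreChart.Carrier, Continuous f →
    ∃ F : Z → toPreChart.Carrier, Continuous F ∧ ∀ a : A, F (a : Z) = f a
  gmap : X → toPreChart.Carrier
  hg : Continuous gmap

variable (B0 X : Type u) [TopologicalSpace B0] [MetrizableSpace B0] [TopologicalSpace X] (πX : X → B0)

/-- The carrier of a datum. -/
abbrev ResDatum.C {X : Type u} [TopologicalSpace X] (d : ResDatum X) : Type u :=
  d.toPreChart.Carrier

instance (d : ResDatum X) : MetrizableSpace d.C := d.hmetr

/-- The ambient product space for a finite set of data. -/
abbrev EF (F : Finset (ResDatum X)) : Type u := B0 × (∀ δ : ↥F, (δ : ResDatum X).C)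

instance (F : Finset (ResDatum X)) : TopologicalSpace (EF B0 X F) :=
  instTopologicalSpaceProd

instance (F : Finset (ResDatum X)) : MetrizableSpace (EF B0 X F) := by
  unfold EF; infer_instance

/-- The canonical map `X → EF F`. -/
def gF (F : Finset (ResDatum X)) : X → EF B0 X F :=
  fun x => (πX x, fun δ => (δ : ResDatum X).gmap x)

lemma gF_cont (hπX : Continuous πX) (F : Finset (ResDatum X)) : Continuous (gF B0 X πX F) :=
  hπX.prodMk (continuous_pi fun δ => (δ : ResDatum X).hg)

/-- Index of the inverse system: a finite set of data and an admissible open set. -/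
structure ResIdx where
  F : Finset (ResDatum X)
  Q : Set (EF B0 X F)
  hQ : IsOpen Q
  hR : range (gF B0 X πX F) ⊆ Q

variable {B0 X πX} in
/-- Restriction map between ambient products. -/
def restr {F F' : Finset (ResDatum X)} (h : F ⊆ F') : EF B0 X F' → EF B0 X F :=
  fun q => (q.1, fun δ => q.2 ⟨δ.1, h δ.2⟩)

variable {B0 X πX} in
lemma restr_cont {F F' : Finset (ResDatum X)} (h : F ⊆ F') :
    Continuous (restr (B0 := B0) h) :=
  continuous_fst.prodMk (continuous_pi fun δ => (continuous_apply _).comp continuous_snd)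

variable {B0 X πX} in
lemma restr_gF {F F' : Finset (ResDatum X)} (h : F ⊆ F') (x : X) :
    restr (B0 := B0) h (gF B0 X πX F' x) = gF B0 X πX F x := rfl

variable {B0 X πX} in
/-- The order on indices. -/
def ResIdx.le (a b : ResIdx B0 X πX) : Prop :=
  ∃ h : a.F ⊆ b.F, ∀ q ∈ b.Q, restr (B0 := B0) h q ∈ a.Q

variable {B0 X πX} in
/-- The bonding maps. -/
def ResIdx.bond (a b : ResIdx B0 X πX) (h : a.le b) (q : ↥b.Q) : ↥a.Q :=
  ⟨restr (B0 := B0) h.choose q.1, h.choose_spec q.1 q.2⟩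

/-- The inverse system. -/
@[reducible] def resSys (hπX : Continuous πX) : FibInvSys B0 where
  Idx := ResIdx B0 X πX
  le := ResIdx.le
  le_refl a := ⟨subset_rfl, fun q hq => hq⟩
  le_trans a b c hab hbc :=
    ⟨hab.choose.trans hbc.choose, fun q hq => hab.choose_spec _ (hbc.choose_spec q hq)⟩
  directed a b := by
    classical
    refine ⟨⟨a.F ∪ b.F,
      restr (B0 := B0) Finset.subset_union_left ⁻¹' a.Q ∩
        restr (B0 := B0) Finset.subset_union_right ⁻¹' b.Q,
      (a.hQ.preimage (restr_cont _)).inter (b.hQ.preimage (restr_cont _)), ?_⟩, ?_, ?_⟩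
    · rintro q ⟨x, rfl⟩
      exact ⟨a.hR (mem_range_self x), b.hR (mem_range_self x)⟩
    · exact ⟨Finset.subset_union_left, fun q hq => hq.1⟩
    · exact ⟨Finset.subset_union_right, fun q hq => hq.2⟩
  obj a := ↥a.Q
  topInst a := inferInstance
  proj a q := q.1.1
  proj_cont a := continuous_subtype_val.fst
  bond a b h := a.bond b h
  bond_cont a b h := by
    refine Continuous.subtype_mk ((restr_cont _).comp continuous_subtype_val) _
  bond_fp a b h q := rfl
  bond_id a q := rfl
  bond_comp a b c h h' q := rfl

/-- The morphism from `X` into the system. -/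
def resMor (hπX : Continuous πX) : FibMapToSys X πX (resSys B0 X πX hπX) where
  maps := fun (a : ResIdx B0 X πX) x => (⟨gF B0 X πX a.F x, a.hR (mem_range_self x)⟩ : ↥a.Q)
  cont := fun (a : ResIdx B0 X πX) => (gF_cont B0 X πX hπX a.F).subtype_mk _
  fp := fun (a : ResIdx B0 X πX) x => rfl
  comm := fun (a a' : ResIdx B0 X πX) h x => rfl

end ResolutionConstruction

section ANRproof

variable {B0 X : Type u} [TopologicalSpace B0] [MetrizableSpace B0] [TopologicalSpace X]
  {πX : X → B0}

/-- Each object of the system is an `ANR_{B0}`. -/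
lemma resObj_isFiberANR (hπX : Continuous πX) (a : ResIdx B0 X πX) :
    IsFiberANR B0 (↥a.Q) (fun q => q.1.1) := by
  classical
  refine ⟨inferInstance, continuous_subtype_val.fst, ?_⟩
  intro X' tX' hmX' πX' hπX' i hi hifp
  by_cases hne : Nonempty ↥a.Q
  swap
  · -- empty object
    have hemp : range i = ∅ := by
      rw [range_eq_empty_iff]
      exact not_nonempty_iff.mp hne
    refine ⟨∅, ?_, fun u => (Set.notMem_empty u.1 u.2).elim, ?_, ?_, ?_, ?_⟩
    · rw [hemp, nhdsSet_empty]
      exact Filter.mem_bot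
    · exact continuous_iff_continuousAt.mpr fun u => (Set.notMem_empty u.1 u.2).elim
    · exact fun u => (Set.notMem_empty u.1 u.2).elim
    · exact fun u => (Set.notMem_empty u.1 u.2).elim
    · exact fun u => (Set.notMem_empty u.1 u.2).elim
  obtain ⟨q₀⟩ := hne
  set A : Set X' := range i with hA
  have hAc : IsClosed A := hi.isClosed_range
  have hAne : A.Nonempty := ⟨i q₀, mem_range_self q₀⟩
  -- the continuous inverse on the image
  have hψ : ∀ u : ↥A, ∃ q : ↥a.Q, i q = u.1 := fun u => u.2
  choose ψ hψ' using hψ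
  have hψc : Continuous ψ := by
    rw [hi.isEmbedding.isInducing.continuous_iff]
    have : i ∘ ψ = fun u : ↥A => u.1 := funext fun u => hψ' u
    rw [this]
    exact continuous_subtype_val
  -- extend each coordinate
  have hco : ∀ δ : ↥a.F, ∃ Φ : X' → (δ : ResDatum X).C,
      Continuous Φ ∧ ∀ u : ↥A, Φ u.1 = (ψ u).1.2 δ := by
    intro δ
    obtain ⟨Φ, hΦc, hΦa⟩ := (δ : ResDatum X).hext X' hmX' A hAc hAne
      (fun u => (ψ u).1.2 δ) (((continuous_apply δ).comp
        (continuous_snd.comp continuous_subtype_val)).comp hψc)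
    exact ⟨Φ, hΦc, hΦa⟩
  choose Φ hΦc hΦa using hco
  set Ψ : X' → EF B0 X a.F := fun x => (πX' x, fun δ => Φ δ x) with hΨ
  have hΨc : Continuous Ψ := hπX'.prodMk (continuous_pi fun δ => hΦc δ)
  have hΨA : ∀ u : ↥A, Ψ u.1 = (ψ u).1 := by
    intro u
    refine Prod.ext ?_ (funext fun δ => hΦa δ u)
    show πX' u.1 = (ψ u).1.1
    rw [← hψ' u, hifp]
  set U' : Set X' := Ψ ⁻¹' a.Q with hU'
  have hU'o : IsOpen U' := a.hQ.preimage hΨc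
  have hAU' : A ⊆ U' := by
    intro x hx
    have : Ψ x ∈ a.Q := by
      rw [show Ψ x = (ψ ⟨x, hx⟩).1 from hΨA ⟨x, hx⟩]
      exact (ψ ⟨x, hx⟩).2
    exact this
  refine ⟨U', hU'o.mem_nhdsSet.mpr hAU', fun u => i ⟨Ψ u.1, u.2⟩, ?_, ?_, ?_, ?_⟩
  · exact hi.continuous.comp ((hΨc.comp continuous_subtype_val).subtype_mk _)
  · exact fun u => mem_range_self _
  · intro u
    show πX' (i ⟨Ψ u.1, u.2⟩) = πX' u.1
    rw [hifp]
  · rintro u ⟨q, hq⟩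
    have hu : (u.1 : X') ∈ A := ⟨q, hq⟩
    have h1 : ψ ⟨u.1, hu⟩ = q := by
      apply hi.injective
      rw [hψ']
      exact hq.symm
    have h2 : Ψ u.1 = q.1 := by
      have h3 := hΨA ⟨u.1, hu⟩
      rw [h1] at h3
      exact h3
    show i ⟨Ψ u.1, u.2⟩ = u.1
    calc i ⟨Ψ u.1, u.2⟩ = i q := by
          congr 1
          exact Subtype.ext h2
    _ = u.1 := hq

end ANRproof

section R2proof

variable {B0 X : Type u} [TopologicalSpace B0] [MetrizableSpace B0] [TopologicalSpace X]
  {πX : X → B0}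

lemma resCondR2 (hπX : Continuous πX) :
    CondR2 X πX (resSys B0 X πX hπX) (resMor B0 X πX hπX) := by
  classical
  intro P tP πP hP 𝒰 h𝒰
  refine ⟨𝒰, h𝒰, ?_⟩
  intro a f f' hf hf' hnear
  set N : Set (↥a.Q) := ⋃ V ∈ 𝒰, (f ⁻¹' V ∩ f' ⁻¹' V) with hN
  have hNo : IsOpen N :=
    isOpen_biUnion fun V hV => ((h𝒰.1 V hV).preimage hf.1).inter ((h𝒰.1 V hV).preimage hf'.1)
  set N' : Set (EF B0 X a.F) := Subtype.val '' N with hN'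
  have hN'o : IsOpen N' := a.hQ.isOpenMap_subtype_val N hNo
  have hN'R : range (gF B0 X πX a.F) ⊆ N' := by
    rintro q ⟨x, rfl⟩
    obtain ⟨V, hV, h1, h2⟩ := hnear x
    exact ⟨(resMor B0 X πX hπX).maps a x, mem_biUnion hV ⟨h1, h2⟩, rfl⟩
  set a' : ResIdx B0 X πX := ⟨a.F, N', hN'o, hN'R⟩ with ha'
  have hle : (resSys B0 X πX hπX).le a a' := by
    refine ⟨subset_rfl, ?_⟩
    rintro q ⟨n, hn, rfl⟩
    exact n.2
  refine ⟨a', hle, ?_⟩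
  intro y
  obtain ⟨n, hn, hval⟩ := y.2
  have hb : (resSys B0 X πX hπX).bond a a' hle y = n := Subtype.ext (by exact hval.symm)
  simp only [hN, mem_iUnion] at hn
  obtain ⟨V, hV, h1, h2⟩ := hn
  refine ⟨V, hV, ?_, ?_⟩
  · show f ((resSys B0 X πX hπX).bond a a' hle y) ∈ V
    rw [hb]; exact h1
  · show f' ((resSys B0 X πX hπX).bond a a' hle y) ∈ V
    rw [hb]; exact h2

end R2proof

section R1proof

variable {B0 X : Type u} [TopologicalSpace B0] [MetrizableSpace B0] [TopologicalSpace X]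
  {πX : X → B0}

set_option maxHeartbeats 1000000 in
set_option synthInstance.maxHeartbeats 200000 in
lemma resCondR1 (hπX : Continuous πX) :
    CondR1 X πX (resSys B0 X πX hπX) (resMor B0 X πX hπX) := by
  classical
  intro P tP πP hP 𝒰 h𝒰 h hh
  haveI hPm : MetrizableSpace P := hP.1
  by_cases hPe : Nonempty P
  swap
  · -- `P` empty, hence `X` empty
    haveI hXe : IsEmpty X := ⟨fun x => hPe ⟨h x⟩⟩
    have hgr : range (gF B0 X πX (∅ : Finset (ResDatum X))) ⊆ (∅ : Set (EF B0 X ∅)) := by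
      rw [range_eq_empty_iff.mpr inferInstance]
    refine ⟨⟨∅, ∅, isOpen_empty, hgr⟩,
      fun q => (Set.notMem_empty q.1 q.2).elim, ?_, fun x => hXe.elim x⟩
    exact ⟨continuous_iff_continuousAt.mpr fun q => (Set.notMem_empty q.1 q.2).elim,
      fun q => (Set.notMem_empty q.1 q.2).elim⟩
  obtain ⟨p₀⟩ := hPe
  letI : MetricSpace P := metrizableSpaceMetric P
  set k : P → BoundedContinuousFunction P ℝ := kurEmb p₀ with hk
  have hki : Isometry k := kurEmb_isometry p₀
  set H : Set (BoundedContinuousFunction P ℝ) := convexHull ℝ (range k) with hH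
  set e : P → B0 × ↥H := fun p => (πP p, ⟨k p, subset_convexHull ℝ _ (mem_range_self p)⟩) with he
  have hec : Continuous e :=
    hP.2.1.prodMk ((hki.continuous).subtype_mk _)
  letI : MetricSpace B0 := metrizableSpaceMetric B0
  haveI : FrechetUrysohnSpace (B0 × ↥H) := inferInstance
  have hce : IsClosedEmbedding e := by
    refine ⟨⟨?_, ?_⟩, ?_⟩
    · -- inducing
      refine IsInducing.of_comp hec (continuous_subtype_val.comp continuous_snd) ?_
      have : (Subtype.val ∘ Prod.snd) ∘ e = k := rfl
      rw [this]
      exact hki.isEmbedding.isInducing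
    · -- injective
      intro p p' hpp'
      have : k p = k p' := congrArg (fun w : B0 × ↥H => (w.2 : BoundedContinuousFunction P ℝ)) hpp'
      exact hki.injective this
    · -- closed range
      refine isClosed_of_closure_subset ?_
      intro w hw
      obtain ⟨u, hu, hul⟩ := mem_closure_iff_seq_limit.mp hw
      choose pn hpn using hu
      have hsnd : Filter.Tendsto (fun n => ((u n).2 : BoundedContinuousFunction P ℝ)) Filter.atTop (nhds ((w.2 : BoundedContinuousFunction P ℝ))) :=
        ((continuous_subtype_val.comp continuous_snd).tendsto w).comp hul
      have hkpn : ∀ n, k (pn n) = ((u n).2 : BoundedContinuousFunction P ℝ) := fun n => by rw [← hpn n]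
      have hvH : (w.2 : BoundedContinuousFunction P ℝ) ∈ H := w.2.2
      have hvcl : (w.2 : BoundedContinuousFunction P ℝ) ∈ closure (range k) := by
        refine mem_closure_of_tendsto hsnd ?_
        filter_upwards with n
        rw [← hkpn n]
        exact mem_range_self _
      obtain ⟨pstar, hpstar⟩ := kurEmb_closed_in_hull p₀ hvH hvcl
      rw [← hk] at hpstar
      -- `pn` converges to `pstar`
      have hpn_tendsto : Filter.Tendsto pn Filter.atTop (nhds pstar) := by
        rw [hki.isEmbedding.isInducing.tendsto_nhds_iff]
        rw [show (k ∘ pn) = fun n => ((u n).2 : BoundedContinuousFunction P ℝ) from funext hkpn, hpstar]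
        exact hsnd
      have hfst : Filter.Tendsto (fun n => (u n).1) Filter.atTop (nhds w.1) :=
        ((continuous_fst).tendsto w).comp hul
      have hfst' : Filter.Tendsto (fun n => πP (pn n)) Filter.atTop (nhds (πP pstar)) :=
        (hP.2.1.tendsto pstar).comp hpn_tendsto
      have hfst'' : (fun n => πP (pn n)) = fun n => (u n).1 := by
        funext n
        rw [← hpn n]
      rw [hfst''] at hfst'
      have hw1 : w.1 = πP pstar := tendsto_nhds_unique hfst hfst'
      refine ⟨pstar, ?_⟩
      have hw2 : (w.2 : BoundedContinuousFunction P ℝ) = k pstar := hpstar.symm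
      show e pstar = w
      refine Prod.ext ?_ (Subtype.ext ?_)
      · exact hw1.symm
      · exact hw2.symm
  -- apply the ANR property of `P` to the ambient space `W`
  obtain ⟨U, hUmem, r, hrc, hrrange, hrfp, hrid⟩ :=
    hP.2.2 (B0 × ↥H) _ inferInstance Prod.fst continuous_fst e hce (fun p => rfl)
  obtain ⟨O, hOo, heO, hOU⟩ := mem_nhdsSet_iff_exists.mp hUmem
  -- the small chart
  set θ : (X →₀ ℝ) →ₗ[ℝ] BoundedContinuousFunction P ℝ := Finsupp.linearCombination ℝ (fun x => k (h x)) with hθ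
  set T' : Set (BoundedContinuousFunction P ℝ) := H ∩ (LinearMap.range θ : Set (BoundedContinuousFunction P ℝ)) with hT'
  have hT'conv : Convex ℝ T' := (convex_convexHull ℝ _).inter (LinearMap.range θ).convex
  have hsec : ∀ v : ↥T', ∃ l : X →₀ ℝ, θ l = v.1 := fun v => v.2.2
  choose sig hsig using hsec
  set s : Set (X →₀ ℝ) := range sig with hs
  set j : ↥s → BoundedContinuousFunction P ℝ := fun u => θ u.1 with hj
  have hjT' : ∀ u : ↥s, j u ∈ T' := by
    rintro ⟨_, v, rfl⟩
    show θ (sig v) ∈ T'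
    rw [hsig v]
    exact v.2
  have hjinj : Function.Injective j := by
    rintro ⟨_, v, rfl⟩ ⟨_, v', rfl⟩ hvv'
    have h1 : θ (sig v) = θ (sig v') := hvv'
    rw [hsig v, hsig v'] at h1
    have : v = v' := Subtype.ext h1
    subst this
    rfl
  letI : MetricSpace ↥s := MetricSpace.induced j hjinj inferInstance
  have hjiso : Isometry j := Isometry.of_dist_eq fun _ _ => rfl
  have hjsurj : ∀ v (hv : v ∈ T'), ∃ u : ↥s, j u = v := by
    intro v hv
    refine ⟨⟨sig ⟨v, hv⟩, mem_range_self _⟩, ?_⟩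
    show θ (sig ⟨v, hv⟩) = v
    exact hsig ⟨v, hv⟩
  have hkhT' : ∀ x : X, k (h x) ∈ T' := by
    intro x
    refine ⟨subset_convexHull ℝ _ (mem_range_self _), ?_⟩
    refine ⟨Finsupp.single x 1, ?_⟩
    rw [hθ]
    simp
  -- the resolution datum
  set d : ResDatum X :=
    { s := s
      τ := inferInstance
      hmetr := (inferInstance : MetrizableSpace ↥s)
      hext := by
        intro Z instZ hmZ A hAc hAne f hfc
        letI : MetricSpace Z := metrizableSpaceMetric Z
        obtain ⟨F', hF'c, hF'a, hF't⟩ := dugundji_ext hAc hAne hT'conv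
          (fun u => j (f u)) (hjiso.continuous.comp hfc) (fun u => hjT' _)
        refine ⟨fun z => (hjsurj (F' z) (hF't z)).choose, ?_, ?_⟩
        · refine (hjiso.isEmbedding.isInducing.continuous_iff).mpr ?_
          have : j ∘ (fun z => (hjsurj (F' z) (hF't z)).choose) = F' :=
            funext fun z => (hjsurj (F' z) (hF't z)).choose_spec
          rw [this]
          exact hF'c
        · intro a
          apply hjinj
          rw [(hjsurj (F' a) (hF't a)).choose_spec, hF'a a]
      gmap := fun x => ⟨sig ⟨k (h x), hkhT' x⟩, mem_range_self _⟩
      hg := by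
        refine (hjiso.isEmbedding.isInducing.continuous_iff).mpr ?_
        have : (j ∘ fun x => (⟨sig ⟨k (h x), hkhT' x⟩, mem_range_self _⟩ : ↥s))
            = fun x => k (h x) := funext fun x => hsig ⟨k (h x), hkhT' x⟩
        rw [this]
        exact hki.continuous.comp hh.1 } with hd
  have hdmem : d ∈ ({d} : Finset (ResDatum X)) := Finset.mem_singleton_self d
  -- the chart-to-ambient map
  set Θ : EF B0 X ({d} : Finset (ResDatum X)) → B0 × ↥H :=
    fun q => (q.1, ⟨j (q.2 ⟨d, hdmem⟩), (hjT' _).1⟩) with hΘ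
  have hΘc : Continuous Θ := by
    refine continuous_fst.prodMk (Continuous.subtype_mk ?_ _)
    exact hjiso.continuous.comp ((continuous_apply
      (⟨d, hdmem⟩ : ↥(({d} : Finset (ResDatum X))))).comp continuous_snd)
  set Q : Set (EF B0 X ({d} : Finset (ResDatum X))) := Θ ⁻¹' O with hQdef
  have hQo : IsOpen Q := hOo.preimage hΘc
  have hgFe : ∀ x : X, Θ (gF B0 X πX {d} x) = e (h x) := by
    intro x
    refine Prod.ext ?_ (Subtype.ext ?_)
    · exact (hh.2 x).symm
    · show j ((gF B0 X πX {d} x).2 ⟨d, hdmem⟩) = k (h x)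
      exact hsig ⟨k (h x), hkhT' x⟩
  have hQR : range (gF B0 X πX ({d} : Finset (ResDatum X))) ⊆ Q := by
    rintro q ⟨x, rfl⟩
    show Θ (gF B0 X πX {d} x) ∈ O
    rw [hgFe x]
    exact heO (mem_range_self _)
  set a : ResIdx B0 X πX := ⟨{d}, Q, hQo, hQR⟩ with ha
  -- the map from the chart to `P`
  have hrin : ∀ q : ↥Q, r ⟨Θ q.1, hOU q.2⟩ ∈ range e := fun q => hrrange _
  set fP : ↥Q → P := fun q => (hrin q).choose with hfP
  have hfPe : ∀ q : ↥Q, e (fP q) = r ⟨Θ q.1, hOU q.2⟩ := fun q => (hrin q).choose_spec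
  have hfPc : Continuous fP := by
    rw [hce.isEmbedding.isInducing.continuous_iff]
    have : e ∘ fP = fun q : ↥Q => r ⟨Θ q.1, hOU q.2⟩ := funext fun q => hfPe q
    rw [this]
    exact hrc.comp (((hΘc.comp continuous_subtype_val)).subtype_mk _)
  have hfPfp : ∀ q : ↥Q, πP (fP q) = q.1.1 := by
    intro q
    have h1 : πP (fP q) = (e (fP q)).1 := rfl
    rw [h1, hfPe q]
    have h2 := hrfp ⟨Θ q.1, hOU q.2⟩
    simpa using h2
  refine ⟨a, fP, ⟨hfPc, fun q => hfPfp q⟩, ?_⟩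
  -- 𝒰-nearness (in fact equality)
  intro x
  have hhx : h x ∈ ⋃₀ 𝒰 := by
    rw [h𝒰.2]
    exact mem_univ _
  obtain ⟨V, hV, hxV⟩ := hhx
  refine ⟨V, hV, hxV, ?_⟩
  have hmaps : ((resMor B0 X πX hπX).maps a x).1 = gF B0 X πX {d} x := rfl
  have heq : fP ((resMor B0 X πX hπX).maps a x) = h x := by
    apply hce.injective
    rw [hfPe]
    have h1 : Θ ((resMor B0 X πX hπX).maps a x).1 = e (h x) := by
      rw [hmaps, hgFe x]
    have h2 := hrid ⟨Θ ((resMor B0 X πX hπX).maps a x).1, hOU ((resMor B0 X πX hπX).maps a x).2⟩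
      (by
        show Θ ((resMor B0 X πX hπX).maps a x).1 ∈ range e
        rw [h1]; exact mem_range_self _)
    simp only [h1] at h2 ⊢
    rw [h2]
  show fP ((resMor B0 X πX hπX).maps a x) ∈ V
  rw [heq]
  exact hxV

end R1proof

/-- Theorem 1.2: every space `X` over a metrizable space `B0` admits an `ANR_{B0}`-resolution
over `B0`. -/
theorem exists_fiberANR_resolution (B0 : Type u) [TopologicalSpace B0] [MetrizableSpace B0]
    (X : Type u) [TopologicalSpace X] (πX : X → B0) (hπX : Continuous πX) :
    ∃ (S : FibInvSys B0) (p : FibMapToSys X πX S),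
      (∀ a : S.Idx, IsFiberANR B0 (S.obj a) (S.proj a)) ∧ IsFibResolution X πX S p :=
  ⟨resSys B0 X πX hπX, resMor B0 X πX hπX,
    fun a => resObj_isFiberANR hπX a, resCondR1 hπX, resCondR2 hπX⟩
end

section
/- Let X be a topological space over B0, let P and P' be ANR_{B0}-spaces, let f : X → P' and h0, h1 : P' → P be f.p. maps, and let S : X × I → P be an f.p. homotopy with S(x,0) = h0(f(x)) and S(x,1) = h1(f(x)) for all x ∈ X. Then there exist an ANR_{B0}-space P'', f.p. maps f' : X → P'' and h : P'' → P', and an f.p. homotopy K : P'' × I → P such that h ∘ f' = f, K(z,0) = h0(h(z)) and K(z,1) = h1(h(z)) for all z ∈ P'', and K ∘ (f' × id_I) = S. -/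
open Set Topology TopologicalSpace unitInterval

universe u

open Metric Set Topology TopologicalSpace Filter

theorem my_continuousOn_union_of_isClosed {α β : Type*} [TopologicalSpace α] [TopologicalSpace β]
    {f : α → β} {s t : Set α} (hs : IsClosed s) (ht : IsClosed t)
    (hfs : ContinuousOn f s) (hft : ContinuousOn f t) : ContinuousOn f (s ∪ t) := by
  intro x hx
  have h1 : ContinuousWithinAt f s x := by
    by_cases h : x ∈ s
    · exact hfs x h
    · exact continuousWithinAt_of_notMem_closure (by rwa [hs.closure_eq])
  have h2 : ContinuousWithinAt f t x := by
    by_cases h : x ∈ t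
    · exact hft x h
    · exact continuousWithinAt_of_notMem_closure (by rwa [ht.closure_eq])
  exact h1.union h2

/-- **Dugundji extension theorem**. -/
theorem dugundji_extension {X : Type*} [MetricSpace X] {E : Type*} [NormedAddCommGroup E]
    [NormedSpace ℝ E] {A : Set X} (hA : IsClosed A) {C : Set E} (hC : Convex ℝ C)
    (hCne : C.Nonempty) (f : A → E) (hf : Continuous f) (hfC : ∀ a, f a ∈ C) :
    ∃ g : X → E, Continuous g ∧ (∀ a : A, g a = f a) ∧ ∀ x, g x ∈ C := by
  rcases A.eq_empty_or_nonempty with hAe | hAne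
  · refine ⟨fun _ => hCne.some, continuous_const, fun a => absurd a.2 (by simp [hAe]),
      fun _ => hCne.some_mem⟩
  -- the open complement as a metric space
  set T := ↥(Aᶜ) with hT
  have radpos : ∀ q : T, 0 < infDist (q : X) A := fun q =>
    (hA.notMem_iff_infDist_pos hAne).mp q.2
  set rad : T → ℝ := fun q => infDist (q : X) A with hrad
  set W : T → Set T := fun q => {p : T | dist (p : X) (q : X) < rad q / 4} with hW
  have hWopen : ∀ q, IsOpen (W q) := fun q =>
    isOpen_lt (continuous_subtype_val.dist continuous_const) continuous_const
  have hWcover : (univ : Set T) ⊆ ⋃ q, W q := fun p _ =>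
    mem_iUnion.2 ⟨p, by simp only [hW, mem_setOf_eq, dist_self]; linarith [radpos p]⟩
  obtain ⟨ρ, hρ⟩ := PartitionOfUnity.exists_isSubordinate isClosed_univ W hWopen hWcover
  -- choose nearby points in A
  have hex : ∀ q : T, ∃ a ∈ A, dist (q : X) a < (5/4) * rad q := fun q =>
    (infDist_lt_iff hAne).mp (by nlinarith [radpos q])
  choose pt hptA hptd using hex
  set v : T → E := fun q => f ⟨pt q, hptA q⟩ with hv
  set gT : T → E := fun p => ∑ᶠ q, ρ q p • v q with hgT
  have hgTcont : Continuous gT :=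
    ρ.continuous_finsum_smul (g := fun q _ => v q) (fun i x _ => continuousAt_const)
  -- finite supports
  have hfin : ∀ p : T, {q : T | p ∈ Function.support ⇑(ρ q)}.Finite := fun p =>
    ρ.locallyFinite.point_finite p
  have hsum_eq : ∀ p : T, ∑ q ∈ (hfin p).toFinset, ρ q p = 1 := by
    intro p
    have h1 := ρ.sum_eq_one (mem_univ p)
    rwa [finsum_eq_sum_of_support_subset _ (s := (hfin p).toFinset) (by
      intro q hq
      simp only [Finite.coe_toFinset, mem_setOf_eq, Function.mem_support] at *
      exact hq)] at h1
  have hgT_sum : ∀ p : T, gT p = ∑ q ∈ (hfin p).toFinset, ρ q p • v q := by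
    intro p
    refine finsum_eq_sum_of_support_subset _ ?_
    intro q hq
    have : ρ q p ≠ 0 := fun h => by simp [h] at hq
    simpa [Finite.coe_toFinset] using this
  have hgTC : ∀ p : T, gT p ∈ C := by
    intro p
    rw [hgT_sum]
    exact hC.sum_mem (fun q _ => ρ.nonneg q p) (hsum_eq p) (fun q _ => hfC _)
  classical
  set g : X → E := fun x => if hx : x ∈ A then f ⟨x, hx⟩ else gT ⟨x, hx⟩ with hg
  have hgA : ∀ a : A, g a = f a := fun a => dif_pos a.2
  have hgC : ∀ x, g x ∈ C := by
    intro x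
    by_cases hx : x ∈ A
    · rw [hg]; simp only [dif_pos hx]; exact hfC _
    · rw [hg]; simp only [dif_neg hx]; exact hgTC _
  refine ⟨g, ?_, hgA, hgC⟩
  rw [continuous_iff_continuousAt]
  intro x
  by_cases hx : x ∈ A
  · -- continuity at points of A
    rw [Metric.continuousAt_iff]
    intro ε hε
    have hfc := Metric.continuousAt_iff.mp (hf.continuousAt (x := ⟨x, hx⟩)) (ε/2) (by positivity)
    obtain ⟨δ, hδpos, hδ⟩ := hfc
    refine ⟨δ/8, by positivity, ?_⟩
    intro y hy
    have hgx : g x = f ⟨x, hx⟩ := dif_pos hx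
    by_cases hyA : y ∈ A
    · have : dist (⟨y, hyA⟩ : A) (⟨x, hx⟩ : A) < δ := by
        rw [Subtype.dist_eq]; simp only; linarith
      have := hδ this
      rw [hg]; simp only [dif_pos hyA, dif_pos hx]
      linarith
    · -- y ∉ A
      set p : T := ⟨y, hyA⟩ with hp
      have hgy : g y = gT p := dif_neg hyA
      have hkey : ∀ q ∈ (hfin p).toFinset, dist (pt q) x < δ := by
        intro q hq
        have hsupp : p ∈ Function.support ⇑(ρ q) := by
          simpa using (Finite.mem_toFinset _).mp hq
        have hWq : p ∈ W q := hρ q (subset_tsupport _ hsupp)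
        have h1 : dist (p : X) (q : X) < rad q / 4 := hWq
        have h2 : rad q ≤ dist (q : X) x := infDist_le_dist_of_mem hx
        have h3 : dist (q : X) x ≤ dist (q : X) (p : X) + dist (p : X) x := dist_triangle _ _ _
        have h4 : dist (q : X) (p : X) = dist (p : X) (q : X) := dist_comm _ _
        have h5 : dist (p : X) x = dist y x := rfl
        have h6 : dist (q : X) (pt q) < (5/4) * rad q := hptd q
        have h7 : dist (pt q) x ≤ dist (pt q) (q : X) + dist (q : X) x := dist_triangle _ _ _
        have h8 : dist (pt q) (q : X) = dist (q : X) (pt q) := dist_comm _ _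
        have h9 : dist y x < δ / 8 := hy
        linarith
      -- the main estimate
      set s := (hfin p).toFinset with hs
      set c : E := f ⟨x, hx⟩ with hc
      have h2 : gT p = ∑ q ∈ s, ρ q p • v q := hgT_sum p
      have h3 : c = ∑ q ∈ s, ρ q p • c := by
        rw [← Finset.sum_smul, hsum_eq p, one_smul]
      have h4 : gT p - c = ∑ q ∈ s, ρ q p • (v q - c) := by
        rw [h2]
        conv_lhs => rw [h3]
        rw [← Finset.sum_sub_distrib]
        exact Finset.sum_congr rfl fun q _ => (smul_sub _ _ _).symm
      have h5 : dist (gT p) c ≤ ∑ q ∈ s, ρ q p * ‖v q - c‖ := by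
        rw [dist_eq_norm, h4]
        refine le_trans (norm_sum_le _ _) (Finset.sum_le_sum fun q _ => ?_)
        rw [norm_smul, Real.norm_of_nonneg (ρ.nonneg q p)]
      have h6 : ∀ q ∈ s, ρ q p * ‖v q - c‖ ≤ ρ q p * (ε/2) := by
        intro q hq
        refine mul_le_mul_of_nonneg_left ?_ (ρ.nonneg q p)
        have : dist ((⟨pt q, hptA q⟩ : A)) (⟨x, hx⟩ : A) < δ := by
          rw [Subtype.dist_eq]; exact hkey q hq
        have := hδ this
        rw [← dist_eq_norm]
        exact le_of_lt this
      have h7 : ∑ q ∈ s, ρ q p * (ε/2) = ε/2 := by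
        rw [← Finset.sum_mul, hsum_eq p, one_mul]
      have h8 : dist (gT p) c < ε := by
        have := le_trans h5 (Finset.sum_le_sum h6)
        rw [h7] at this
        linarith
      rw [hgy, hgx]
      exact h8
  · -- continuity off A
    have hopen : IsOpen (Aᶜ) := hA.isOpen_compl
    have hco : ContinuousOn g (Aᶜ) := by
      rw [continuousOn_iff_continuous_restrict]
      have : (Aᶜ).domRestrict g = gT := by
        funext p
        exact dif_neg p.2
      rw [this]; exact hgTcont
    exact hco.continuousAt (hopen.mem_nhds hx)

open Metric Filter Function

set_option synthInstance.maxHeartbeats 1000000 in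
/-- An `ANR_{B0}` is an `ANE_{B0}` (with open neighbourhood). -/
theorem fiberANR_ane {B0 : Type u} [TopologicalSpace B0] [MetrizableSpace B0]
    {Y : Type u} [TopologicalSpace Y] {πY : Y → B0} (hY : IsFiberANR B0 Y πY)
    (X : Type u) [TopologicalSpace X] (hXm : MetrizableSpace X)
    (πX : X → B0) (hπX : Continuous πX)
    (A : Set X) (hAc : IsClosed A)
    (f : A → Y) (hf : Continuous f) (hffp : ∀ a : A, πY (f a) = πX a) :
    ∃ U : Set X, IsOpen U ∧ A ⊆ U ∧
      ∃ g : U → Y, Continuous g ∧ (∀ u : U, πY (g u) = πX u) ∧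
        ∀ (a : X) (ha : a ∈ A) (hu : a ∈ U), g ⟨a, hu⟩ = f ⟨a, ha⟩ := by
  obtain ⟨hYm, hπY, hret⟩ := hY
  rcases isEmpty_or_nonempty Y with hYe | hYne
  · -- Y empty, hence A empty
    have hAe : A = ∅ := eq_empty_iff_forall_notMem.2 fun a ha => hYe.false (f ⟨a, ha⟩)
    haveI : IsEmpty ↥(∅ : Set X) := ⟨fun u => notMem_empty _ u.2⟩
    refine ⟨∅, isOpen_empty, by simp [hAe], fun u => isEmptyElim u, ?_, fun u => isEmptyElim u,
      fun a ha => absurd ha (by simp [hAe])⟩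
    exact continuous_of_discreteTopology
  obtain ⟨y₀⟩ := hYne
  letI mB : MetricSpace B0 := metrizableSpaceMetric B0
  letI mX : MetricSpace X := metrizableSpaceMetric X
  letI mY : MetricSpace Y := metrizableSpaceMetric Y
  -- the Kuratowski embedding
  set E := BoundedContinuousFunction Y ℝ with hE
  have hcont : ∀ y : Y, Continuous (fun w => dist y w - dist y₀ w) := fun y =>
    (continuous_const.dist continuous_id).sub (continuous_const.dist continuous_id)
  set e : Y → E := fun y => BoundedContinuousFunction.ofNormedAddCommGroup
      (fun w => dist y w - dist y₀ w) (hcont y) (dist y y₀)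
      (fun w => by rw [Real.norm_eq_abs]; exact abs_dist_sub_le y y₀ w) with he
  have he_app : ∀ y w, e y w = dist y w - dist y₀ w := fun y w => rfl
  have he_dist : ∀ y y', dist (e y) (e y') = dist y y' := by
    intro y y'
    apply le_antisymm
    · refine (BoundedContinuousFunction.dist_le dist_nonneg).2 fun w => ?_
      rw [Real.dist_eq, he_app, he_app]
      have : dist y w - dist y₀ w - (dist y' w - dist y₀ w) = dist y w - dist y' w := by ring
      rw [this]
      exact abs_dist_sub_le y y' w
    · have h := BoundedContinuousFunction.dist_coe_le_dist (f := e y) (g := e y') y'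
      rw [Real.dist_eq, he_app, he_app] at h
      have : dist y y' - dist y₀ y' - (dist y' y' - dist y₀ y') = dist y y' := by
        rw [dist_self]; ring
      rwa [this, abs_of_nonneg dist_nonneg] at h
  have he_isom : Isometry e := Isometry.of_dist_eq he_dist
  set H : Set E := convexHull ℝ (range e) with hH
  have heH : ∀ y, e y ∈ H := fun y => subset_convexHull ℝ _ (mem_range_self y)
  set Z := B0 × ↥H with hZ
  set πZ : Z → B0 := Prod.fst with hπZ
  set j : Y → Z := fun y => (πY y, ⟨e y, heH y⟩) with hj
  have hjcont : Continuous j := hπY.prodMk (he_isom.continuous.subtype_mk _)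
  have hje : IsEmbedding j := by
    refine IsEmbedding.of_comp hjcont continuous_snd ?_
    have : (Prod.snd ∘ j) = Set.codRestrict e H heH := rfl
    rw [this]
    exact he_isom.isEmbedding.codRestrict _ _
  -- Wojdysławski: the range of j is closed
  haveI hseq : SequentialSpace Z := inferInstance
  have hjclosed : IsClosed (range j) := by
    apply IsSeqClosed.isClosed
    intro z p hz hp
    choose yn hyn using hz
    have h2 : Tendsto (fun n => e (yn n)) atTop (nhds (p.2 : E)) := by
      refine Tendsto.congr (fun n => ?_)
        ((continuous_subtype_val.tendsto p.2).comp ((continuous_snd.tendsto p).comp hp))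
      show ((z n).2 : E) = e (yn n)
      rw [← hyn n]
    -- p.2 ∈ H gives a convex combination
    have hmemH : (p.2 : E) ∈ convexHull ℝ (range e) := p.2.2
    rw [convexHull_eq] at hmemH
    obtain ⟨ι, t, w, zf, hw0, hw1, hzs, hcm⟩ := hmemH
    have hv : (p.2 : E) = ∑ i ∈ t, w i • zf i := by
      rw [← hcm, Finset.centerMass_eq_of_sum_1 _ _ hw1]
    -- pick witnesses for points of t
    classical
    have hζ : ∀ i, ∃ ζ : Y, i ∈ t → e ζ = zf i := by
      intro i
      by_cases hi : i ∈ t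
      · obtain ⟨ζ, hζ⟩ := hzs i hi
        exact ⟨ζ, fun _ => hζ⟩
      · exact ⟨y₀, fun h => absurd h hi⟩
    choose ζ hζe using hζ
    obtain ⟨i0, hi0t, hi0⟩ : ∃ i ∈ t, 0 < w i := by
      by_contra hcon
      push_neg at hcon
      have : ∑ i ∈ t, w i = 0 :=
        Finset.sum_eq_zero fun i hi => le_antisymm (hcon i hi) (hw0 i hi)
      rw [hw1] at this; norm_num at this
    -- key evaluation estimate
    have hterm : ∀ n, w i0 * dist (ζ i0) (yn n) ≤ dist (e (yn n)) (p.2 : E) := by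
      intro n
      have hb := BoundedContinuousFunction.dist_coe_le_dist (f := e (yn n)) (g := (p.2 : E)) (yn n)
      have hval : (p.2 : E) (yn n) = ∑ i ∈ t, w i * (dist (ζ i) (yn n) - dist y₀ (yn n)) := by
        rw [hv]
        rw [BoundedContinuousFunction.coe_sum]
        rw [Finset.sum_apply]
        refine Finset.sum_congr rfl fun i hi => ?_
        rw [BoundedContinuousFunction.coe_smul]
        simp only [Pi.smul_apply, smul_eq_mul]
        rw [← hζe i hi, he_app]
      have hself : e (yn n) (yn n) = - dist y₀ (yn n) := by
        rw [he_app, dist_self]; ring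
      have hexp : e (yn n) (yn n) - (p.2 : E) (yn n) = - ∑ i ∈ t, w i * dist (ζ i) (yn n) := by
        rw [hself, hval]
        have : ∑ i ∈ t, w i * (dist (ζ i) (yn n) - dist y₀ (yn n))
            = ∑ i ∈ t, w i * dist (ζ i) (yn n) - (∑ i ∈ t, w i) * dist y₀ (yn n) := by
          rw [Finset.sum_mul, ← Finset.sum_sub_distrib]
          exact Finset.sum_congr rfl fun i _ => by ring
        rw [this, hw1]; ring
      have hsum_nonneg : ∀ i ∈ t, 0 ≤ w i * dist (ζ i) (yn n) := fun i hi =>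
        mul_nonneg (hw0 i hi) dist_nonneg
      have hge : w i0 * dist (ζ i0) (yn n) ≤ ∑ i ∈ t, w i * dist (ζ i) (yn n) :=
        Finset.single_le_sum hsum_nonneg hi0t
      have habs : |e (yn n) (yn n) - (p.2 : E) (yn n)| ≤ dist (e (yn n)) (p.2 : E) := by
        rw [← Real.dist_eq]; exact hb
      rw [hexp, abs_neg] at habs
      refine le_trans ?_ habs
      refine le_trans hge (le_abs_self _)
    have hd0 : Tendsto (fun n => dist (e (yn n)) (p.2 : E)) atTop (nhds 0) :=
      (tendsto_iff_dist_tendsto_zero.mp h2)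
    have hdist0 : Tendsto (fun n => dist (ζ i0) (yn n)) atTop (nhds 0) := by
      have hle : ∀ n, dist (ζ i0) (yn n) ≤ (1 / w i0) * dist (e (yn n)) (p.2 : E) := by
        intro n
        have h := hterm n
        rw [mul_comm] at h
        have h' := (le_div_iff₀ hi0).mpr h
        rwa [div_eq_mul_inv, mul_comm, ← one_div] at h'
      have h0le : ∀ n, (0:ℝ) ≤ dist (ζ i0) (yn n) := fun n => dist_nonneg
      have : Tendsto (fun n => (1 / w i0) * dist (e (yn n)) (p.2 : E)) atTop (nhds 0) := by
        have := hd0.const_mul (1 / w i0)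
        simpa using this
      exact squeeze_zero h0le hle this
    have hyζ : Tendsto yn atTop (nhds (ζ i0)) := by
      rw [tendsto_iff_dist_tendsto_zero]
      refine hdist0.congr fun n => dist_comm _ _
    have : Tendsto (fun n => j (yn n)) atTop (nhds (j (ζ i0))) := (hjcont.tendsto _).comp hyζ
    have hpj : p = j (ζ i0) := by
      refine tendsto_nhds_unique ?_ this
      refine hp.congr fun n => (hyn n).symm
    exact hpj ▸ mem_range_self _
  have hjfp : ∀ y, πZ (j y) = πY y := fun _ => rfl
  have hjce : IsClosedEmbedding j := ⟨hje, hjclosed⟩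
  obtain ⟨U₀, hU₀, r₀, hr₀c, hr₀mem, hr₀fp, hr₀fix⟩ :=
    hret Z inferInstance inferInstance πZ continuous_fst j hjce hjfp
  -- Dugundji extension of e ∘ f
  obtain ⟨g0, hg0c, hg0A, hg0H⟩ := dugundji_extension (X := X) (E := E) hAc
    (convex_convexHull ℝ _) ⟨e y₀, heH y₀⟩ (fun a => e (f a)) (he_isom.continuous.comp hf)
    (fun a => heH (f a))
  set G : X → Z := fun x => (πX x, ⟨g0 x, hg0H x⟩) with hG
  have hGc : Continuous G := hπX.prodMk (hg0c.subtype_mk _)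
  have hGA : ∀ (a : X) (ha : a ∈ A), G a = j (f ⟨a, ha⟩) := by
    intro a ha
    rw [hG, hj]
    refine Prod.ext ?_ (Subtype.ext ?_)
    · exact (hffp ⟨a, ha⟩).symm
    · exact hg0A ⟨a, ha⟩
  set U : Set X := G ⁻¹' (interior U₀) with hU
  have hUopen : IsOpen U := (isOpen_interior).preimage hGc
  have hrangesub : range j ⊆ interior U₀ := subset_interior_iff_mem_nhdsSet.2 hU₀
  have hAU : A ⊆ U := by
    intro a ha
    rw [hU, mem_preimage, hGA a ha]
    exact hrangesub (mem_range_self _)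
  set φ := hje.toHomeomorph with hφ
  have hjφ : ∀ w : range j, j (φ.symm w) = ↑w := by
    intro w
    have h1 : φ (φ.symm w) = w := φ.apply_symm_apply w
    have h2 : (φ (φ.symm w) : Z) = j (φ.symm w) := rfl
    rw [← h2, h1]
  set g : U → Y := fun u => φ.symm ⟨r₀ ⟨G u, interior_subset u.2⟩, hr₀mem _⟩ with hg
  have hgc : Continuous g := by
    refine φ.symm.continuous.comp ?_
    refine Continuous.subtype_mk ?_ _
    exact hr₀c.comp ((hGc.comp continuous_subtype_val).subtype_mk _)
  refine ⟨U, hUopen, hAU, g, hgc, ?_, ?_⟩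
  · intro u
    have h1 : πY (g u) = πZ (j (g u)) := rfl
    rw [h1, hg]
    simp only
    rw [hjφ]
    have := hr₀fp ⟨G u, interior_subset u.2⟩
    rw [this]
  · intro a ha hu
    have hGa : G a = j (f ⟨a, ha⟩) := hGA a ha
    have hmem : G a ∈ range j := hGa ▸ mem_range_self _
    have hfix := hr₀fix ⟨G a, interior_subset hu⟩ hmem
    have : (⟨r₀ ⟨G a, interior_subset hu⟩, hr₀mem _⟩ : range j) = ⟨j (f ⟨a, ha⟩), mem_range_self _⟩ := by
      apply Subtype.ext
      simp only
      rw [hfix]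
      exact hGa
    rw [hg]
    simp only
    rw [this]
    have : φ (f ⟨a, ha⟩) = ⟨j (f ⟨a, ha⟩), mem_range_self _⟩ := rfl
    rw [← this, Homeomorph.symm_apply_apply]

set_option synthInstance.maxHeartbeats 1000000 in
set_option maxHeartbeats 1000000 in
/-- Lemma 1.8: given f.p. maps `f : X → P'`, `h0, h1 : P' → P` between `ANR_{B0}`-spaces and an
f.p. homotopy `S` from `h0 ∘ f` to `h1 ∘ f`, there are an `ANR_{B0}`-space `P''`, f.p. maps
`f' : X → P''` and `h : P'' → P'` with `h ∘ f' = f`, and an f.p. homotopy `K : P'' × I → P` from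
`h0 ∘ h` to `h1 ∘ h` with `K ∘ (f' × 1_I) = S`. -/
theorem fiberANR_homotopy_factorization (B0 : Type u) [TopologicalSpace B0] [MetrizableSpace B0]
    (X : Type u) [TopologicalSpace X] (πX : X → B0) (hπX : Continuous πX)
    (P : Type u) [TopologicalSpace P] (πP : P → B0) (hP : IsFiberANR B0 P πP)
    (P' : Type u) [TopologicalSpace P'] (πP' : P' → B0) (hP' : IsFiberANR B0 P' πP')
    (f : X → P') (hf : IsFPMap πX πP' f)
    (h0 h1 : P' → P) (hh0 : IsFPMap πP' πP h0) (hh1 : IsFPMap πP' πP h1)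
    (S : X × unitInterval → P) (hS : Continuous S) (hSfp : ∀ x t, πP (S (x, t)) = πX x)
    (hS0 : ∀ x, S (x, 0) = h0 (f x)) (hS1 : ∀ x, S (x, 1) = h1 (f x)) :
    ∃ (P'' : Type u) (_ : TopologicalSpace P'') (πP'' : P'' → B0),
      IsFiberANR B0 P'' πP'' ∧
      ∃ (f' : X → P'') (h : P'' → P'),
        IsFPMap πX πP'' f' ∧ IsFPMap πP'' πP' h ∧ (∀ x, h (f' x) = f x) ∧
        ∃ K : P'' × unitInterval → P, Continuous K ∧
          (∀ z t, πP (K (z, t)) = πP'' z) ∧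
          (∀ z, K (z, 0) = h0 (h z)) ∧ (∀ z, K (z, 1) = h1 (h z)) ∧
          ∀ x t, K (f' x, t) = S (x, t) := by
  classical
  haveI hPm : MetrizableSpace P := hP.1
  haveI hP'm : MetrizableSpace P' := hP'.1
  letI mP : MetricSpace P := metrizableSpaceMetric P
  -- the fiberwise path space
  set Sc : C(X × unitInterval, P) := ⟨S, hS⟩ with hSc
  set Q := {z : P' × C(unitInterval, P) //
    z.2 0 = h0 z.1 ∧ z.2 1 = h1 z.1 ∧ ∀ t, πP (z.2 t) = πP' z.1} with hQdef
  set πQ : Q → B0 := fun z => πP' z.1.1 with hπQdef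
  haveI hQm : MetrizableSpace Q := by
    haveI h1 : MetrizableSpace C(unitInterval, P) := inferInstance
    haveI h2 : MetrizableSpace (P' × C(unitInterval, P)) := inferInstance
    exact Topology.IsEmbedding.subtypeVal.metrizableSpace
  have hπQ : Continuous πQ := hP'.2.1.comp (continuous_fst.comp continuous_subtype_val)
  -- the three structure maps
  have hf'mem : ∀ x : X, (Sc.curry x) 0 = h0 (f x) ∧ (Sc.curry x) 1 = h1 (f x) ∧
      ∀ t, πP ((Sc.curry x) t) = πP' (f x) := by
    intro x
    refine ⟨?_, ?_, fun t => ?_⟩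
    · rw [ContinuousMap.curry_apply]; exact hS0 x
    · rw [ContinuousMap.curry_apply]; exact hS1 x
    · rw [ContinuousMap.curry_apply]
      show πP (S (x, t)) = πP' (f x)
      rw [hSfp x t, hf.2 x]
  set f' : X → Q := fun x => ⟨(f x, Sc.curry x), hf'mem x⟩ with hf'def
  have hf'c : Continuous f' :=
    Continuous.subtype_mk (hf.1.prodMk Sc.curry.continuous) _
  set h : Q → P' := fun z => z.1.1 with hhdef
  have hhc : Continuous h := continuous_fst.comp continuous_subtype_val
  set K : Q × unitInterval → P := fun zt => zt.1.1.2 zt.2 with hKdef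
  have hKc : Continuous K := ContinuousEval.continuous_eval.comp
    ((continuous_snd.comp (continuous_subtype_val.comp continuous_fst)).prodMk continuous_snd)
  refine ⟨Q, (inferInstance : TopologicalSpace
    {z : P' × C(unitInterval, P) //
      z.2 0 = h0 z.1 ∧ z.2 1 = h1 z.1 ∧ ∀ t, πP (z.2 t) = πP' z.1}), πQ, ⟨hQm, hπQ, ?_⟩, f', h, ⟨hf'c, fun x => hf.2 x⟩,
    ⟨hhc, fun z => rfl⟩, fun x => rfl, K, hKc,
    (fun z t => z.2.2.2 t), (fun z => z.2.1), (fun z => z.2.2.1),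
    (fun x t => by
      show (Sc.curry x) t = S (x, t)
      rw [ContinuousMap.curry_apply]
      rfl)⟩
  -- it remains to prove the ANR property of Q
  intro Z tZ hZm πZ hπZ i hi hifp
  haveI := hZm
  set φi := hi.toIsEmbedding.toHomeomorph with hφidef
  set inv : ↥(range i) → Q := fun w => φi.symm w with hinvdef
  have hinvc : Continuous inv := φi.symm.continuous
  have hi_inv : ∀ w : range i, i (inv w) = ↑w := by
    intro w
    have h1 : φi (φi.symm w) = w := φi.apply_symm_apply w
    have h2 : (φi (φi.symm w) : Z) = i (φi.symm w) := rfl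
    rw [hinvdef]
    rw [← h2, h1]
  have hinv_i : ∀ p : Q, inv ⟨i p, mem_range_self p⟩ = p := by
    intro p
    show φi.symm ⟨i p, mem_range_self p⟩ = p
    have heq : (⟨i p, mem_range_self p⟩ : ↥(range i)) = φi p := rfl
    rw [heq, Homeomorph.symm_apply_apply]
  -- Step 1: extend h ∘ i⁻¹ to a neighbourhood V1 of range i
  obtain ⟨V1, hV1o, hV1s, ht, htc, htfp, htext⟩ := fiberANR_ane hP' Z hZm πZ hπZ
    (range i) hi.isClosed_range (fun w => (inv w).1.1)
    ((continuous_fst.comp continuous_subtype_val).comp hinvc)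
    (by
      intro w
      show πP' (inv w).1.1 = πZ ↑w
      have h1 : πP' (inv w).1.1 = πQ (inv w) := rfl
      rw [h1, ← hifp (inv w), hi_inv])
  -- Step 2: extend the tautological homotopy
  set X2 := ↥V1 × unitInterval with hX2def
  set π2 : X2 → B0 := fun w => πZ ↑w.1 with hπ2def
  have hπ2c : Continuous π2 := hπZ.comp (continuous_subtype_val.comp continuous_fst)
  set A2 : Set X2 := {w | (↑w.1 : Z) ∈ range i ∨ w.2 = 0 ∨ w.2 = 1} with hA2def
  set C1 : Set X2 := {w | (↑w.1 : Z) ∈ range i} with hC1def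
  set C2 : Set X2 := {w | w.2 = 0} with hC2def
  set C3 : Set X2 := {w | w.2 = 1} with hC3def
  have hA2eq : A2 = C1 ∪ (C2 ∪ C3) := by
    ext w; simp [hA2def, hC1def, hC2def, hC3def, Set.mem_union]
  have hC1c : IsClosed C1 :=
    hi.isClosed_range.preimage (continuous_subtype_val.comp continuous_fst)
  have hC2c : IsClosed C2 := isClosed_singleton.preimage continuous_snd
  have hC3c : IsClosed C3 := isClosed_singleton.preimage continuous_snd
  have hA2c : IsClosed A2 := by rw [hA2eq]; exact hC1c.union (hC2c.union hC3c)
  set F2 : X2 → P := fun w =>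
    if hz : (↑w.1 : Z) ∈ range i then (inv ⟨↑w.1, hz⟩).1.2 w.2
    else if ((w.2 : ℝ) ≤ 1/2) then h0 (ht w.1) else h1 (ht w.1) with hF2def
  -- ht agrees with h ∘ i⁻¹ on points of range i
  have htr : ∀ (q : ↥V1) (hz : (↑q : Z) ∈ range i), ht q = (inv ⟨↑q, hz⟩).1.1 := by
    intro q hz
    exact htext ↑q hz q.2
  have hF2zero : ∀ q : ↥V1, F2 (q, 0) = h0 (ht q) := by
    intro q
    by_cases hz : (↑q : Z) ∈ range i
    · rw [hF2def]
      simp only [dif_pos hz]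
      rw [(inv ⟨↑q, hz⟩).2.1, htr q hz]
    · rw [hF2def]
      simp only [dif_neg hz]
      rw [if_pos]
      norm_num
  have hF2one : ∀ q : ↥V1, F2 (q, 1) = h1 (ht q) := by
    intro q
    by_cases hz : (↑q : Z) ∈ range i
    · rw [hF2def]
      simp only [dif_pos hz]
      rw [(inv ⟨↑q, hz⟩).2.2.1, htr q hz]
    · rw [hF2def]
      simp only [dif_neg hz]
      rw [if_neg]
      norm_num
  have hF2fp : ∀ w : X2, πP (F2 w) = πZ ↑w.1 := by
    intro w
    rw [hF2def]
    by_cases hz : (↑w.1 : Z) ∈ range i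
    · simp only [dif_pos hz]
      rw [(inv ⟨↑w.1, hz⟩).2.2.2 w.2]
      have h1 : πP' (inv ⟨↑w.1, hz⟩).1.1 = πQ (inv ⟨↑w.1, hz⟩) := rfl
      rw [h1, ← hifp (inv ⟨↑w.1, hz⟩), hi_inv]
    · simp only [dif_neg hz]
      by_cases hle : ((w.2 : ℝ) ≤ 1/2)
      · rw [if_pos hle, hh0.2, htfp]
      · rw [if_neg hle, hh1.2, htfp]
  have hF2cont : ContinuousOn F2 A2 := by
    rw [hA2eq]
    refine my_continuousOn_union_of_isClosed hC1c (hC2c.union hC3c) ?_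
      (my_continuousOn_union_of_isClosed hC2c hC3c ?_ ?_)
    · rw [continuousOn_iff_continuous_restrict]
      have heq : C1.domRestrict F2 =
          fun q : ↥C1 => ((inv ⟨((q : X2).1 : Z), q.2⟩).1.2) (q : X2).2 := by
        funext q
        exact dif_pos q.2
      rw [heq]
      refine ContinuousEval.continuous_eval.comp (Continuous.prodMk ?_ ?_)
      · exact (continuous_snd.comp (continuous_subtype_val.comp hinvc)).comp
          (Continuous.subtype_mk
            (continuous_subtype_val.comp (continuous_fst.comp continuous_subtype_val)) _)
      · exact continuous_snd.comp continuous_subtype_val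
    · refine ContinuousOn.congr ((hh0.1.comp (htc.comp continuous_fst)).continuousOn) ?_
      intro w hw
      have hw0 : w.2 = 0 := hw
      have : w = (w.1, 0) := by rw [Prod.ext_iff]; exact ⟨rfl, hw0⟩
      rw [this]
      exact hF2zero w.1
    · refine ContinuousOn.congr ((hh1.1.comp (htc.comp continuous_fst)).continuousOn) ?_
      intro w hw
      have hw1 : w.2 = 1 := hw
      have : w = (w.1, 1) := by rw [Prod.ext_iff]; exact ⟨rfl, hw1⟩
      rw [this]
      exact hF2one w.1
  obtain ⟨V2, hV2o, hA2V2, Kt, hKtc, hKtfp, hKtext⟩ := fiberANR_ane hP X2 inferInstance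
    π2 hπ2c A2 hA2c (A2.restrict F2) (continuousOn_iff_continuous_restrict.mp hF2cont)
    (fun w => hF2fp ↑w)
  -- the tube
  set U' : Set ↥V1 := {q | ∀ t : unitInterval, ((q, t) : X2) ∈ V2} with hU'def
  have hU'o : IsOpen U' := by
    rw [isOpen_iff_forall_mem_open]
    intro q hq
    obtain ⟨u, v, hu, hv, hqu, hvt, huv⟩ := generalized_tube_lemma isCompact_singleton
      isCompact_univ hV2o (n := V2) (by
        intro w hw
        rcases hw with ⟨hw1, -⟩
        have : w = (q, w.2) := by
          rw [Prod.ext_iff]; exact ⟨hw1, rfl⟩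
        rw [this]
        exact hq w.2)
    refine ⟨u, ?_, hu, hqu rfl⟩
    intro p hp t
    exact huv (Set.mk_mem_prod hp (hvt (mem_univ t)))
  set U : Set Z := Subtype.val '' U' with hUdef
  have hUo : IsOpen U := hV1o.isOpenMap_subtype_val U' hU'o
  have hrangeU : range i ⊆ U := by
    intro z hz
    refine ⟨⟨z, hV1s hz⟩, fun t => hA2V2 (Or.inl hz), rfl⟩
  have hUV1 : ∀ u : ↥U, (↑u : Z) ∈ V1 := by
    intro u
    obtain ⟨q, hq, he⟩ := u.2
    exact he ▸ q.2
  have hUall : ∀ (u : ↥U) (t : unitInterval), ((⟨↑u, hUV1 u⟩ : ↥V1), t) ∈ V2 := by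
    intro u t
    obtain ⟨q, hq, he⟩ := u.2
    have hqq : (⟨↑u, hUV1 u⟩ : ↥V1) = q := Subtype.ext he.symm
    rw [hqq]
    exact hq t
  -- the retraction
  set kc : C(↥U × unitInterval, P) :=
    ⟨fun p => Kt ⟨(⟨↑p.1, hUV1 p.1⟩, p.2), hUall p.1 p.2⟩,
      hKtc.comp (Continuous.subtype_mk
        ((Continuous.subtype_mk (continuous_subtype_val.comp continuous_fst) _).prodMk
          continuous_snd) _)⟩ with hkcdef
  have hkt : ∀ (u : ↥U) (t : unitInterval),
      (kc.curry u) t = Kt ⟨((⟨↑u, hUV1 u⟩ : ↥V1), t), hUall u t⟩ := by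
    intro u t
    rw [ContinuousMap.curry_apply]
    rfl
  have hKtF2 : ∀ (w : X2) (hw : w ∈ A2) (hv : w ∈ V2), Kt ⟨w, hv⟩ = F2 w := by
    intro w hw hv
    exact hKtext w hw hv
  have hρmem : ∀ u : ↥U, ((ht ⟨↑u, hUV1 u⟩, kc.curry u) : P' × C(unitInterval, P)).2 0 =
      h0 (ht ⟨↑u, hUV1 u⟩) ∧ (kc.curry u) 1 = h1 (ht ⟨↑u, hUV1 u⟩) ∧
      ∀ t, πP ((kc.curry u) t) = πP' (ht ⟨↑u, hUV1 u⟩) := by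
    intro u
    set q : ↥V1 := ⟨↑u, hUV1 u⟩ with hqdef
    refine ⟨?_, ?_, fun t => ?_⟩
    · rw [hkt u 0, hKtF2 (q, 0) (Or.inr (Or.inl rfl)) (hUall u 0)]
      exact hF2zero q
    · rw [hkt u 1, hKtF2 (q, 1) (Or.inr (Or.inr rfl)) (hUall u 1)]
      exact hF2one q
    · rw [hkt u t, hKtfp ⟨(q, t), hUall u t⟩, htfp q]
  set ρ : ↥U → Q := fun u => ⟨(ht ⟨↑u, hUV1 u⟩, kc.curry u), hρmem u⟩ with hρdef
  have hρc : Continuous ρ := by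
    refine Continuous.subtype_mk (Continuous.prodMk ?_ kc.curry.continuous) _
    exact htc.comp (Continuous.subtype_mk continuous_subtype_val _)
  set r : ↥U → Z := fun u => i (ρ u) with hrdef
  have hrc : Continuous r := hi.continuous.comp hρc
  refine ⟨U, hUo.mem_nhdsSet.2 hrangeU, r, hrc, fun u => mem_range_self _, ?_, ?_⟩
  · intro u
    rw [hrdef]
    simp only
    rw [hifp (ρ u)]
    show πP' (ht ⟨↑u, hUV1 u⟩) = πZ ↑u
    exact htfp ⟨↑u, hUV1 u⟩
  · intro u hu
    set q : ↥V1 := ⟨↑u, hUV1 u⟩ with hqdef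
    have hρu : ρ u = inv ⟨↑u, hu⟩ := by
      refine Subtype.ext (Prod.ext ?_ ?_)
      · exact htr q hu
      · refine ContinuousMap.ext fun t => ?_
        rw [hkt u t, hKtF2 (q, t) (Or.inl hu) (hUall u t)]
        rw [hF2def]
        exact dif_pos hu
    rw [hrdef]
    simp only
    rw [hρu, hi_inv]
end
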